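/- For each prime p ≤ k with p^α exactly dividing d = gcd{f(n) : n ∈ ℤ} (f ∈ ℤ[x] of degree k), there exists a residue class a_p modulo p^{α+1} such that p^α exactly divides f(n) for all n ≡ a_p (mod p^{α+1}). -/
import Mathlib


/-- Let f ∈ ℤ[x] of degree k, let d be the gcd of all values f(n), n ∈ ℤ, and
let p ≤ k be a prime with p^α ‖ d.  Then there is a residue class a_p mod
p^(α+1) on which p^α exactly divides f(n). -/
theorem stmt_19 (f : Polynomial ℤ) (k : ℕ) (hk : f.natDegree = k) (d : ℕ)
    (hd : ∀ m : ℕ, m ∣ d ↔ ∀ n : ℤ, (m : ℤ) ∣ f.eval n)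
    (p : ℕ) (hp : p.Prime) (hpk : p ≤ k) (α : ℕ)
    (hα : p ^ α ∣ d) (hα' : ¬ p ^ (α + 1) ∣ d) :
    ∃ a : ℤ, ∀ n : ℤ, n ≡ a [ZMOD (p : ℤ) ^ (α + 1)] →
      (p : ℤ) ^ α ∣ f.eval n ∧ ¬ (p : ℤ) ^ (α + 1) ∣ f.eval n := by
  rw [hd] at hα'
  push_neg at hα'
  obtain ⟨a, ha⟩ := hα'
  refine ⟨a, fun n hn => ⟨?_, ?_⟩⟩
  · have := (hd (p ^ α)).mp hα n
    simpa using this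
  · intro hdvd
    apply ha
    have hsub : ((p : ℤ) ^ (α + 1)) ∣ f.eval n - f.eval a := by
      have h1 : (n - a) ∣ f.eval n - f.eval a := Polynomial.sub_dvd_eval_sub n a f
      exact dvd_trans (Int.ModEq.dvd hn.symm) h1
    have : ((p : ℤ) ^ (α + 1)) ∣ f.eval a := (dvd_sub_right hdvd).mp hsub
    simpa using this
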